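/- Let B be a symmetric n×n real matrix with top-r eigenvector matrix U (orthonormal columns) and corresponding eigenvalue matrix Λ, so BU = UΛ. Let B^{(i)} be B with the i-th row and column zeroed out. Then ‖(B^{(i)} − B)U‖_F ≤ (‖Λ‖ + ‖B_{i:}‖₂)·‖U_{i:}‖₂. -/

import Mathlib

/-- The spectral (ℓ₂ operator) norm of a real square matrix. -/
noncomputable def specNorm {r : ℕ} (M : Matrix (Fin r) (Fin r) ℝ) : ℝ :=
  ‖Matrix.toEuclideanCLM (𝕜 := ℝ) M‖

set_option maxHeartbeats 1000000 in
lemma abs_diag_le_specNorm {r : ℕ} (M : Matrix (Fin r) (Fin r) ℝ) (s : Fin r) :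
    |M s s| ≤ specNorm M := by
  set T := Matrix.toEuclideanCLM (𝕜 := ℝ) M with hT
  set v := T (EuclideanSpace.single s 1) with hv
  have h1 : ‖v‖ ≤ ‖T‖ := by
    have := T.le_opNorm (EuclideanSpace.single s 1)
    rwa [EuclideanSpace.norm_single, norm_one, mul_one] at this
  have h2 : v s = M s s := by
    have : (WithLp.equiv 2 _) v = M.mulVec ((WithLp.equiv 2 _) (EuclideanSpace.single s (1:ℝ))) := by
      rw [hv, hT]
      exact Matrix.ofLp_toEuclideanCLM M _
    have h3 : v s = M.mulVec ((WithLp.equiv 2 _) (EuclideanSpace.single s (1:ℝ))) s :=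
      congrFun this s
    rw [h3]
    have h5 : ∀ t, (WithLp.equiv 2 (Fin r → ℝ)) (EuclideanSpace.single s (1:ℝ)) t = if t = s then 1 else 0 := by
      intro t; exact EuclideanSpace.single_apply s 1 t
    simp [Matrix.mulVec, dotProduct, h5]
  have h4 : |v s| ≤ ‖v‖ := by
    rw [EuclideanSpace.norm_eq]
    rw [← Real.sqrt_sq_eq_abs]
    apply Real.sqrt_le_sqrt
    have := Finset.single_le_sum (f := fun t => ‖v t‖ ^ 2) (fun t _ => by positivity) (Finset.mem_univ s)
    simpa [sq_abs] using this
  rw [← h2]; exact h4.trans h1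

open Finset in
/-- If `B U = U Λ` with `U` having orthonormal columns and `Λ` diagonal, and
`B⁽ⁱ⁾` is `B` with the `i`-th row and column zeroed out, then
`‖(B⁽ⁱ⁾ - B) U‖_F ≤ (‖Λ‖ + ‖B_{i:}‖₂) ‖U_{i:}‖₂`. -/
theorem stmt_7 (n r : ℕ) (B : Matrix (Fin n) (Fin n) ℝ) (hB : B.IsSymm)
    (U : Matrix (Fin n) (Fin r) ℝ) (hU : U.transpose * U = 1)
    (Λ : Matrix (Fin r) (Fin r) ℝ) (hΛ : ∀ s t, s ≠ t → Λ s t = 0)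
    (heig : B * U = U * Λ)
    (i : Fin n) (Bi : Matrix (Fin n) (Fin n) ℝ)
    (hBi : ∀ j k, Bi j k = if j = i ∨ k = i then 0 else B j k) :
    Real.sqrt (∑ j, ∑ s, ((Bi - B) * U) j s ^ 2) ≤
      (specNorm Λ + Real.sqrt (∑ j, B i j ^ 2)) * Real.sqrt (∑ s, U i s ^ 2) := by
  set a := specNorm Λ with ha
  set b2 : ℝ := ∑ j, B i j ^ 2 with hb2
  set x2 : ℝ := ∑ s, U i s ^ 2 with hx2
  have hb2nn : 0 ≤ b2 := Finset.sum_nonneg fun _ _ => sq_nonneg _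
  have hx2nn : 0 ≤ x2 := Finset.sum_nonneg fun _ _ => sq_nonneg _
  have hann : 0 ≤ a := norm_nonneg _
  -- entrywise formula
  have hent_i : ∀ s, ((Bi - B) * U) i s = -(U i s * Λ s s) := by
    intro s
    have h1 : ((Bi - B) * U) i s = ∑ k, (Bi i k - B i k) * U k s := by
      simp [Matrix.mul_apply, Matrix.sub_apply]
    have h2 : ∀ k, Bi i k - B i k = -B i k := by
      intro k; rw [hBi]; simp
    have h3 : ((Bi - B) * U) i s = -(B * U) i s := by
      rw [h1, Matrix.mul_apply, ← Finset.sum_neg_distrib]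
      exact Finset.sum_congr rfl fun k _ => by rw [h2 k]; ring
    rw [h3, heig, Matrix.mul_apply]
    rw [Finset.sum_eq_single s (fun t _ ht => by rw [hΛ t s ht, mul_zero])
      (fun h => absurd (Finset.mem_univ s) h)]
  have hent_ne : ∀ j, j ≠ i → ∀ s, ((Bi - B) * U) j s = -(B j i * U i s) := by
    intro j hj s
    have h1 : ((Bi - B) * U) j s = ∑ k, (Bi j k - B j k) * U k s := by
      simp [Matrix.mul_apply, Matrix.sub_apply]
    rw [h1, Finset.sum_eq_single i ?_ (fun h => absurd (Finset.mem_univ i) h)]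
    · rw [hBi]; simp [hj]
    · intro k _ hk
      rw [hBi]; simp [hj, hk]
  -- sum decomposition
  have hsum : ∑ j, ∑ s, ((Bi - B) * U) j s ^ 2 =
      (∑ s, (U i s * Λ s s) ^ 2) + ∑ j ∈ univ.erase i, B j i ^ 2 * x2 := by
    rw [← Finset.add_sum_erase _ _ (Finset.mem_univ i)]
    congr 1
    · exact Finset.sum_congr rfl fun s _ => by rw [hent_i s]; ring
    · refine Finset.sum_congr rfl fun j hj => ?_
      have hj' := Finset.ne_of_mem_erase hj
      rw [hx2, Finset.mul_sum]
      exact Finset.sum_congr rfl fun s _ => by rw [hent_ne j hj' s]; ring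
  -- bounds
  have hT1 : ∑ s, (U i s * Λ s s) ^ 2 ≤ a ^ 2 * x2 := by
    rw [hx2, Finset.mul_sum]
    refine Finset.sum_le_sum fun s _ => ?_
    have h := abs_diag_le_specNorm Λ s
    have : (Λ s s) ^ 2 ≤ a ^ 2 := by
      rw [← sq_abs]; exact pow_le_pow_left₀ (abs_nonneg _) h 2
    calc (U i s * Λ s s) ^ 2 = (Λ s s) ^ 2 * U i s ^ 2 := by ring
      _ ≤ a ^ 2 * U i s ^ 2 := by nlinarith [sq_nonneg (U i s)]
      _ = a ^ 2 * U i s ^ 2 := rfl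
  have hT2 : ∑ j ∈ univ.erase i, B j i ^ 2 * x2 ≤ b2 * x2 := by
    rw [hb2, Finset.sum_mul]
    have hsub : ∑ j ∈ univ.erase i, B j i ^ 2 * x2 ≤ ∑ j, B j i ^ 2 * x2 :=
      Finset.sum_le_sum_of_subset_of_nonneg (Finset.subset_univ _)
        (fun j _ _ => mul_nonneg (sq_nonneg _) hx2nn)
    refine hsub.trans (le_of_eq ?_)
    refine Finset.sum_congr rfl fun j _ => ?_
    rw [← hB.apply i j]
  set b := Real.sqrt b2 with hb
  have hbnn : 0 ≤ b := Real.sqrt_nonneg _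
  have hbsq : b ^ 2 = b2 := Real.sq_sqrt hb2nn
  have hkey : ∑ j, ∑ s, ((Bi - B) * U) j s ^ 2 ≤ (a + b) ^ 2 * x2 := by
    rw [hsum]
    have : a ^ 2 * x2 + b2 * x2 ≤ (a + b) ^ 2 * x2 := by nlinarith [mul_nonneg (mul_nonneg hann hbnn) hx2nn, hbsq]
    linarith [hT1, hT2]
  calc Real.sqrt (∑ j, ∑ s, ((Bi - B) * U) j s ^ 2)
      ≤ Real.sqrt ((a + b) ^ 2 * x2) := Real.sqrt_le_sqrt hkey
    _ = (a + b) * Real.sqrt x2 := by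
        rw [Real.sqrt_mul (sq_nonneg _), Real.sqrt_sq (by positivity)]
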